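/- With H̃ = (h̃_{ij}), the Perron–Frobenius eigenvalue of the Harris–Sevastyanov transformed process equals ρ and β̃ = ρ/(ρ−1): precisely, for every real x > 1 one has m̃ ∑_{n≥1} x^{-n} g̃ H̃^n 1^t = 1 if and only if x = ρ, and β̃ := m̃ ∑_{n≥1} n ρ^{-n} g̃ H̃^n 1^t = ρ/(ρ−1). -/

import Mathlib

/-- Right action of an infinite matrix on a column vector: `(H y)_i = ∑_j H_{ij} y_j`. -/
noncomputable def matVec (H : ℕ → ℕ → ℝ) (y : ℕ → ℝ) : ℕ → ℝ := fun i => ∑' j, H i j * y j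

/-- `k`-fold right action: `(H^k y)_i`. -/
noncomputable def matPow (H : ℕ → ℕ → ℝ) : ℕ → (ℕ → ℝ) → ℕ → ℝ
  | 0, y => y
  | k + 1, y => matVec H (matPow H k y)

/-- Left action of an infinite matrix on a row vector: `(x H)_j = ∑_i x_i H_{ij}`. -/
noncomputable def vecMat (x : ℕ → ℝ) (H : ℕ → ℕ → ℝ) : ℕ → ℝ := fun j => ∑' i, x i * H i j

/-- `k`-fold left action: `(x H^k)_j`. -/
noncomputable def vecPow (x : ℕ → ℝ) (H : ℕ → ℕ → ℝ) : ℕ → ℕ → ℝ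
  | 0 => x
  | k + 1 => vecMat (vecPow x H k) H

/-- The linear-fractional generating function
`f_i(s) = h_{i0} + (∑_j h_{ij} s_j) / (1 + m - m ∑_j g_j s_j)` with `h_{i0} = 1 - ∑_j h_{ij}`. -/
noncomputable def lfGen (H : ℕ → ℕ → ℝ) (g : ℕ → ℝ) (m : ℝ) (i : ℕ) (s : ℕ → ℝ) : ℝ :=
  (1 - ∑' j, H i j) + (∑' j, H i j * s j) / (1 + m - m * ∑' j, g j * s j)


/-- Main auxiliary lemma: the transformed matrix is substochastic with row sums one,
and iterates of a probability row vector stay probability vectors. -/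
theorem rowsum_one_iterates
    {gt : ℕ → ℝ} {Ht : ℕ → ℕ → ℝ}
    (hgt0 : ∀ j, 0 ≤ gt j) (hgts : Summable gt) (hgt1 : ∑' j, gt j = 1)
    (hHt0 : ∀ i j, 0 ≤ Ht i j) (hHts : ∀ i, Summable (Ht i)) (hHt1 : ∀ i, ∑' j, Ht i j = 1) :
    ∀ k, (∀ j, 0 ≤ vecPow gt Ht k j) ∧ Summable (vecPow gt Ht k)
        ∧ ∑' j, vecPow gt Ht k j = 1 := by
  intro k
  induction k with
  | zero => exact ⟨hgt0, hgts, hgt1⟩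
  | succ k ih =>
    obtain ⟨hx0, hxs, hx1⟩ := ih
    set x := vecPow gt Ht k with hxdef
    have hslice : ∀ i, Summable fun j => x i * Ht i j := fun i => (hHts i).mul_left _
    have hsums : (fun i => ∑' j, x i * Ht i j) = x := by
      funext i; rw [tsum_mul_left, hHt1 i, mul_one]
    have hF0 : (0 : ℕ × ℕ → ℝ) ≤ fun p => x p.1 * Ht p.1 p.2 := by
      intro p; exact mul_nonneg (hx0 _) (hHt0 _ _)
    have hF : Summable fun p : ℕ × ℕ => x p.1 * Ht p.1 p.2 := by
      rw [summable_prod_of_nonneg hF0]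
      exact ⟨hslice, by rw [hsums]; exact hxs⟩
    have hvec : vecPow gt Ht (k + 1) = fun j => ∑' i, x i * Ht i j := rfl
    have hFswap : Summable fun p : ℕ × ℕ => x p.2 * Ht p.2 p.1 := hF.prod_symm
    have hmarg : Summable fun j => ∑' i, x i * Ht i j := by
      rw [summable_prod_of_nonneg (f := fun p : ℕ × ℕ => x p.2 * Ht p.2 p.1)
        (fun p => mul_nonneg (hx0 _) (hHt0 _ _))] at hFswap
      exact hFswap.2
    refine ⟨fun j => tsum_nonneg fun i => mul_nonneg (hx0 _) (hHt0 _ _), by rw [hvec]; exact hmarg, ?_⟩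
    rw [hvec]
    calc ∑' (j) (i), x i * Ht i j = ∑' (i) (j), x i * Ht i j := Summable.tsum_comm hF
      _ = ∑' i, x i := by rw [show (fun i => ∑' j, x i * Ht i j) = x from hsums]
      _ = 1 := hx1

/-- for the Harris–Sevastyanov transformed triplet
`(H̃, g̃, m̃)` with `m̃ = ρ-1`, `g̃_j = m g_j (1-q_j)/(ρ-1)` and
`h̃_{ij} = (1-q_j)(h_{ij} + m g_j (q_i - h_{i0}))/(1-q_i)`, the Perron–Frobenius eigenvalue is
`ρ` (i.e. for every `x > 1`, `m̃ ∑_{n≥1} x⁻ⁿ g̃ H̃^n 1^t = 1` iff `x = ρ`) and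
`β̃ := m̃ ∑_{n≥1} n ρ⁻ⁿ g̃ H̃^n 1^t = ρ/(ρ-1)`. -/
theorem tilde_PF_and_beta
    (H : ℕ → ℕ → ℝ) (g q : ℕ → ℝ) (m ρ : ℝ)
    (hH : ∀ i j, 0 ≤ H i j) (hHsum : ∀ i, Summable (H i)) (hHrow : ∀ i, ∑' j, H i j ≤ 1)
    (hg : ∀ j, 0 ≤ g j) (hgsum : Summable g) (hg1 : ∑' j, g j = 1)
    (hm : 0 < m) (hρ1 : 1 < ρ) (hρm : ρ < 1 + m)
    (hq0 : ∀ i, 0 < q i) (hq1 : ∀ i, q i < 1)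
    (hfix : ∀ i, lfGen H g m i q = q i)
    (hgq : ∑' j, g j * q j = (1 + m - ρ) / m) :
    (∀ x : ℝ, 1 < x →
        ((ρ - 1) * ∑' n : ℕ, x⁻¹ ^ (n + 1)
              * ∑' j, vecPow (fun l => m * g l * (1 - q l) / (ρ - 1))
                  (fun i' j' => (1 - q j') * (H i' j' + m * g j' * (q i' - (1 - ∑' l, H i' l)))
                      / (1 - q i')) (n + 1) j
            = 1
          ↔ x = ρ))
    ∧ (ρ - 1) * ∑' n : ℕ, ((n : ℝ) + 1) * ρ⁻¹ ^ (n + 1)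
          * ∑' j, vecPow (fun l => m * g l * (1 - q l) / (ρ - 1))
              (fun i' j' => (1 - q j') * (H i' j' + m * g j' * (q i' - (1 - ∑' l, H i' l)))
                  / (1 - q i')) (n + 1) j
      = ρ / (ρ - 1) := by
  have hρ : (0:ℝ) < ρ - 1 := by linarith
  have hρ0 : (0:ℝ) < ρ := by linarith
  have hmne : m ≠ 0 := ne_of_gt hm
  have h1q : ∀ i, (0:ℝ) < 1 - q i := fun i => by linarith [hq1 i]
  set gt : ℕ → ℝ := fun l => m * g l * (1 - q l) / (ρ - 1) with hgtdef
  set Ht : ℕ → ℕ → ℝ := fun i' j' =>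
      (1 - q j') * (H i' j' + m * g j' * (q i' - (1 - ∑' l, H i' l))) / (1 - q i') with hHtdef
  -- summability facts
  have hHq : ∀ i, Summable fun j => H i j * q j := fun i =>
    Summable.of_nonneg_of_le (fun j => mul_nonneg (hH i j) (hq0 j).le)
      (fun j => mul_le_of_le_one_right (hH i j) (hq1 j).le) (hHsum i)
  have hgqsum : Summable fun j => g j * q j :=
    Summable.of_nonneg_of_le (fun j => mul_nonneg (hg j) (hq0 j).le)
      (fun j => mul_le_of_le_one_right (hg j) (hq1 j).le) hgsum
  have hg1qsum : Summable fun j => g j * (1 - q j) :=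
    Summable.of_nonneg_of_le (fun j => mul_nonneg (hg j) (h1q j).le)
      (fun j => mul_le_of_le_one_right (hg j) (by linarith [hq0 j])) hgsum
  have hg1q : ∑' j, g j * (1 - q j) = (ρ - 1) / m := by
    have hrw : (fun j => g j * (1 - q j)) = fun j => g j - g j * q j := by funext j; ring
    rw [hrw, Summable.tsum_sub hgsum hgqsum, hg1, hgq]
    field_simp
    ring
  -- the fixed point identity
  have hfix' : ∀ i, ∑' j, H i j * q j = ρ * (q i - (1 - ∑' l, H i l)) := by
    intro i
    have h := hfix i
    unfold lfGen at h
    rw [hgq] at h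
    have hden : 1 + m - m * ((1 + m - ρ) / m) = ρ := by field_simp; ring
    rw [hden] at h
    have h2 : (∑' j, H i j * q j) / ρ = q i - (1 - ∑' l, H i l) := by linarith
    rw [div_eq_iff (ne_of_gt hρ0)] at h2
    linarith [h2]
  have hc0 : ∀ i, 0 ≤ q i - (1 - ∑' l, H i l) := by
    intro i
    have h1 : (0:ℝ) ≤ ∑' j, H i j * q j :=
      tsum_nonneg fun j => mul_nonneg (hH i j) (hq0 j).le
    nlinarith [hfix' i]
  -- rows of Ht
  have hHtrw : ∀ i, Ht i = fun j =>
      ((1 - q j) * H i j + (m * (q i - (1 - ∑' l, H i l))) * (g j * (1 - q j)))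
        * (1 - q i)⁻¹ := by
    intro i; funext j
    simp only [hHtdef]
    rw [div_eq_mul_inv]; ring_nf
  have hAsum : ∀ i, Summable fun j => (1 - q j) * H i j := fun i =>
    Summable.of_nonneg_of_le (fun j => mul_nonneg (h1q j).le (hH i j))
      (fun j => mul_le_of_le_one_left (hH i j) (by linarith [hq0 j])) (hHsum i)
  have hHt0 : ∀ i j, 0 ≤ Ht i j := by
    intro i j
    simp only [hHtdef]
    exact div_nonneg (mul_nonneg (h1q j).le (add_nonneg (hH i j)
      (mul_nonneg (mul_nonneg hm.le (hg j)) (hc0 i)))) (h1q i).le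
  have hHts : ∀ i, Summable (Ht i) := by
    intro i
    rw [hHtrw i]
    exact ((hAsum i).add (hg1qsum.mul_left _)).mul_right _
  have hA : ∀ i, ∑' j, (1 - q j) * H i j
      = (∑' l, H i l) - ρ * (q i - (1 - ∑' l, H i l)) := by
    intro i
    have hrw : (fun j => (1 - q j) * H i j) = fun j => H i j - H i j * q j := by
      funext j; ring
    rw [hrw, Summable.tsum_sub (hHsum i) (hHq i), hfix' i]
  have hHt1 : ∀ i, ∑' j, Ht i j = 1 := by
    intro i
    rw [hHtrw i, tsum_mul_right, Summable.tsum_add (hAsum i) (hg1qsum.mul_left _),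
      tsum_mul_left, hA i, hg1q]
    have hc : m * (q i - (1 - ∑' l, H i l)) * ((ρ - 1) / m)
        = (ρ - 1) * (q i - (1 - ∑' l, H i l)) := by field_simp
    rw [hc]
    have hone : (∑' l, H i l) - ρ * (q i - (1 - ∑' l, H i l))
        + (ρ - 1) * (q i - (1 - ∑' l, H i l)) = 1 - q i := by ring
    rw [hone, mul_inv_cancel₀ (ne_of_gt (h1q i))]
  -- gt facts
  have hgt0 : ∀ j, 0 ≤ gt j := fun j => by
    simp only [hgtdef]
    exact div_nonneg (mul_nonneg (mul_nonneg hm.le (hg j)) (h1q j).le) hρ.le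
  have hgtrw : gt = fun l => (m * (g l * (1 - q l))) / (ρ - 1) := by
    funext l; simp only [hgtdef]; ring
  have hgts : Summable gt := by
    rw [hgtrw]; exact (hg1qsum.mul_left m).div_const _
  have hgt1 : ∑' j, gt j = 1 := by
    rw [hgtrw]
    simp only [div_eq_mul_inv]
    rw [tsum_mul_right, tsum_mul_left, hg1q]
    field_simp
  have key := rowsum_one_iterates hgt0 hgts hgt1 hHt0 hHts hHt1
  have hinner : ∀ n : ℕ, (∑' j, vecPow gt Ht (n + 1) j) = 1 := fun n => (key (n + 1)).2.2
  constructor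
  · intro x hx
    have hx0 : (0:ℝ) < x := lt_trans one_pos hx
    have hxinv0 : (0:ℝ) ≤ x⁻¹ := inv_nonneg.mpr hx0.le
    have hxinv1 : x⁻¹ < 1 := inv_lt_one_of_one_lt₀ hx
    have hxne : x - 1 ≠ 0 := sub_ne_zero.mpr (ne_of_gt hx)
    have hrw : (fun n : ℕ => x⁻¹ ^ (n + 1) * ∑' j, vecPow gt Ht (n + 1) j)
        = fun n : ℕ => x⁻¹ * x⁻¹ ^ n := by
      funext n; rw [hinner n, mul_one, pow_succ]; ring
    rw [hrw, tsum_mul_left, tsum_geometric_of_lt_one hxinv0 hxinv1]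
    have h1 : x⁻¹ * (1 - x⁻¹)⁻¹ = (x - 1)⁻¹ := by
      rw [eq_comm, inv_eq_iff_eq_inv, eq_comm]
      field_simp
    rw [h1]
    constructor
    · intro h
      rw [mul_inv_eq_one₀ (by exact fun h0 => hxne h0)] at h
      linarith
    · rintro rfl
      exact mul_inv_cancel₀ (ne_of_gt hρ)
  · have hr : ‖ρ⁻¹‖ < 1 := by
      rw [Real.norm_eq_abs, abs_of_pos (inv_pos.mpr hρ0)]
      exact inv_lt_one_of_one_lt₀ hρ1
    have hsum := hasSum_coe_mul_geometric_of_norm_lt_one (𝕜 := ℝ) hr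
    have hshift := Summable.tsum_eq_zero_add hsum.summable
    simp only [Nat.cast_zero, zero_mul, pow_zero, zero_add, Nat.cast_add, Nat.cast_one] at hshift
    have hrw : (fun n : ℕ => ((n : ℝ) + 1) * ρ⁻¹ ^ (n + 1) * ∑' j, vecPow gt Ht (n + 1) j)
        = fun n : ℕ => ((n : ℝ) + 1) * ρ⁻¹ ^ (n + 1) := by
      funext n; rw [hinner n, mul_one]
    rw [hrw, ← hshift, hsum.tsum_eq]
    have h1ρ : 1 - ρ⁻¹ = (ρ - 1) / ρ := by field_simp
    rw [h1ρ]
    field_simp
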